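/- The play operator is Lipschitz continuous: there exists L > 0 such that for all admissible pairs (u, w₀¹) and (v, w₀²) of absolutely continuous inputs with initial states, ‖𝒫[u,w₀¹] - 𝒫[v,w₀²]‖_{C⁰([0,T])} ≤ L(‖u - v‖_{C⁰([0,T])} + |w₀¹ - w₀²|). In fact one may take L = 1 for the uniform norm. -/

import Mathlib

open MeasureTheory Set Filter

/-- `f` is absolutely continuous on `[0,T]`: it is the integral of an integrable function. -/
def AbsContOn (T : ℝ) (f : ℝ → ℝ) : Prop :=
  ∃ f' : ℝ → ℝ, MeasureTheory.IntegrableOn f' (Set.Icc 0 T) ∧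
    ∀ t ∈ Set.Icc (0:ℝ) T, f t = f 0 + ∫ s in Set.Ioc (0:ℝ) t, f' s

/-- `w` is the output of the scalar play operator with parameter `ρ` on `[0,T]`,
applied to the input `u` with initial state `w₀`, characterized by the
variational inequality: `w` is absolutely continuous, `w 0 = w₀`,
`|u - w| ≤ ρ` on `[0,T]`, and `w' (u - w - v) ≥ 0` a.e. for all `|v| ≤ ρ`. -/
def IsPlayOutput (ρ T : ℝ) (u : ℝ → ℝ) (w₀ : ℝ) (w : ℝ → ℝ) : Prop :=
  w 0 = w₀ ∧
  ∃ w' : ℝ → ℝ, MeasureTheory.IntegrableOn w' (Set.Icc 0 T) ∧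
    (∀ t ∈ Set.Icc (0:ℝ) T, w t = w₀ + ∫ s in Set.Ioc (0:ℝ) t, w' s) ∧
    (∀ t ∈ Set.Icc (0:ℝ) T, |u t - w t| ≤ ρ) ∧
    (∀ᵐ t ∂(MeasureTheory.volume.restrict (Set.Icc (0:ℝ) T)),
      ∀ v : ℝ, |v| ≤ ρ → 0 ≤ w' t * (u t - w t - v))

/-- One-sided key estimate for the difference of two play outputs. -/
lemma play_diff_le (ρ T : ℝ) (u v : ℝ → ℝ) (w₀₁ w₀₂ : ℝ) (w₁ w₂ : ℝ → ℝ)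
    (h₁ : IsPlayOutput ρ T u w₀₁ w₁) (h₂ : IsPlayOutput ρ T v w₀₂ w₂)
    (S : ℝ) (hS0 : 0 ≤ S) (hS : ∀ s ∈ Set.Icc (0:ℝ) T, u s - v s ≤ S) :
    ∀ t ∈ Set.Icc (0:ℝ) T, w₁ t - w₂ t ≤ S + |w₀₁ - w₀₂| := by
  obtain ⟨hw10, w₁', hint₁, hrep₁, hbd₁, hvi₁⟩ := h₁
  obtain ⟨hw20, w₂', hint₂, hrep₂, hbd₂, hvi₂⟩ := h₂
  set g : ℝ → ℝ := fun s => w₁' s - w₂' s with hgdef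
  set d : ℝ → ℝ := fun s => w₁ s - w₂ s with hddef
  set c : ℝ := S + |w₀₁ - w₀₂| with hcdef
  have hg_int : IntegrableOn g (Set.Icc 0 T) := hint₁.sub hint₂
  have hsubT : ∀ s : ℝ, s ∈ Set.Icc (0:ℝ) T → Set.Ioc (0:ℝ) s ⊆ Set.Icc (0:ℝ) T := by
    intro s hs
    exact (Set.Ioc_subset_Icc_self).trans (Set.Icc_subset_Icc_right hs.2)
  have hdrep : ∀ s ∈ Set.Icc (0:ℝ) T,
      d s = (w₀₁ - w₀₂) + ∫ x in Set.Ioc (0:ℝ) s, g x := by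
    intro s hs
    have h1 := hrep₁ s hs
    have h2 := hrep₂ s hs
    have := MeasureTheory.integral_sub (hint₁.mono_set (hsubT s hs))
      (hint₂.mono_set (hsubT s hs))
    simp only [hddef, h1, h2, hgdef]
    rw [this]; ring
  -- combined variational inequality
  have hVI : ∀ᵐ s ∂(volume.restrict (Set.Icc (0:ℝ) T)),
      0 ≤ g s * ((u s - v s) - d s) := by
    filter_upwards [hvi₁, hvi₂, ae_restrict_mem measurableSet_Icc] with s hs1 hs2 hsmem
    have hb1 : |u s - w₁ s| ≤ ρ := hbd₁ s hsmem
    have hb2 : |v s - w₂ s| ≤ ρ := hbd₂ s hsmem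
    have h1 := hs1 (v s - w₂ s) hb2
    have h2 := hs2 (u s - w₁ s) hb1
    simp only [hgdef, hddef]
    nlinarith [h1, h2]
  intro t ht
  by_contra hcon
  push_neg at hcon
  have hconc : c < d t := hcon
  -- the set of times ≤ t where d ≤ c
  have hcont_d : ContinuousOn d (Set.Icc 0 T) := by
    have hp := intervalIntegral.continuousOn_primitive (μ := volume) (f := g) (a := 0) (b := T)
      hg_int
    have hc : ContinuousOn (fun _ : ℝ => w₀₁ - w₀₂) (Set.Icc 0 T) := continuousOn_const
    exact (hc.add hp).congr (fun s hs => hdrep s hs)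
  have hIccsub : Set.Icc (0:ℝ) t ⊆ Set.Icc 0 T := Set.Icc_subset_Icc_right ht.2
  set K : Set ℝ := Set.Icc 0 t ∩ d ⁻¹' Set.Iic c with hKdef
  have hKne : (0:ℝ) ∈ K := by
    constructor
    · exact ⟨le_refl 0, ht.1⟩
    · have : d 0 = w₀₁ - w₀₂ := by simp [hddef, hw10, hw20]
      simp only [Set.mem_preimage, Set.mem_Iic, this, hcdef]
      have := le_abs_self (w₀₁ - w₀₂)
      linarith
  have hKclosed : IsClosed K :=
    (hcont_d.mono hIccsub).preimage_isClosed_of_isClosed isClosed_Icc isClosed_Iic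
  have hKbdd : BddAbove K := BddAbove.mono Set.inter_subset_left (bddAbove_Icc)
  set r : ℝ := sSup K with hrdef
  have hrK : r ∈ K := hKclosed.csSup_mem ⟨0, hKne⟩ hKbdd
  have hrt : r ≤ t := hrK.1.2
  have hr0 : 0 ≤ r := hrK.1.1
  have hdt : ¬ (t ∈ K) := by
    intro h
    have : d t ≤ c := h.2
    linarith
  have hrlt : r < t := by
    rcases lt_or_eq_of_le hrt with h | h
    · exact h
    · exact absurd (h ▸ hrK) hdt
  -- on (r, t], d > c
  have hdgt : ∀ s ∈ Set.Ioc r t, c < d s := by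
    intro s hs
    by_contra h
    push_neg at h
    have hsK : s ∈ K := ⟨⟨hr0.trans hs.1.le, hs.2⟩, h⟩
    exact absurd (le_csSup hKbdd hsK) (not_le.mpr hs.1)
  have hIocsub : Set.Ioc r t ⊆ Set.Icc 0 T := fun s hs => ⟨hr0.trans hs.1.le, hs.2.trans ht.2⟩
  -- a.e. on (r,t], g ≤ 0
  have hgle : ∀ᵐ s ∂(volume.restrict (Set.Ioc r t)), g s ≤ 0 := by
    filter_upwards [ae_restrict_of_ae_restrict_of_subset hIocsub hVI,
      ae_restrict_mem measurableSet_Ioc] with s hvi hsmem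
    have h1 : u s - v s ≤ S := hS s (hIocsub hsmem)
    have h2 : c < d s := hdgt s hsmem
    have h3 : (u s - v s) - d s < 0 := by simp only [hcdef] at h2; nlinarith [abs_nonneg (w₀₁ - w₀₂)]
    nlinarith [hvi]
  have hintle : ∫ x in Set.Ioc r t, g x ≤ 0 := integral_nonpos_of_ae hgle
  -- d t = d r + ∫_(r,t] g
  have hsplit : ∫ x in Set.Ioc (0:ℝ) t, g x
      = (∫ x in Set.Ioc (0:ℝ) r, g x) + ∫ x in Set.Ioc r t, g x := by
    rw [← MeasureTheory.setIntegral_union (Set.Ioc_disjoint_Ioc_of_le le_rfl) measurableSet_Ioc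
      (hg_int.mono_set (hsubT r (hIccsub ⟨hr0, hrt⟩)))
      (hg_int.mono_set hIocsub), Set.Ioc_union_Ioc_eq_Ioc hr0 hrt]
  have hdrt : d t = d r + ∫ x in Set.Ioc r t, g x := by
    rw [hdrep t ht, hdrep r (hIccsub ⟨hr0, hrt⟩), hsplit]; ring
  have : d t ≤ c := by
    have hrc : d r ≤ c := hrK.2
    linarith
  linarith

/-- Lipschitz continuity of the play operator in the uniform norm, with constant `L = 1`:
`‖𝒫[u,w₀¹] - 𝒫[v,w₀²]‖_∞ ≤ L (‖u - v‖_∞ + |w₀¹ - w₀²|)`. -/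
theorem play_lipschitz (ρ T : ℝ) (hρ : 0 < ρ) (hT : 0 ≤ T) :
    ∃ L : ℝ, 0 < L ∧ L = 1 ∧
      ∀ (u v : ℝ → ℝ) (w₀₁ w₀₂ : ℝ),
        AbsContOn T u → AbsContOn T v →
        |w₀₁ - u 0| ≤ ρ → |w₀₂ - v 0| ≤ ρ →
        ∀ (w₁ w₂ : ℝ → ℝ),
          IsPlayOutput ρ T u w₀₁ w₁ → IsPlayOutput ρ T v w₀₂ w₂ →
          ∀ t ∈ Set.Icc (0:ℝ) T,
            |w₁ t - w₂ t| ≤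
              L * (sSup ((fun s => |u s - v s|) '' Set.Icc (0:ℝ) T) + |w₀₁ - w₀₂|) := by
  refine ⟨1, one_pos, rfl, ?_⟩
  intro u v w₀₁ w₀₂ hu hv _ _ w₁ w₂ h₁ h₂ t ht
  -- continuity of u and v on [0,T]
  have hcont : ∀ f : ℝ → ℝ, AbsContOn T f → ContinuousOn f (Set.Icc 0 T) := by
    rintro f ⟨f', hf'int, hf'rep⟩
    have hp := intervalIntegral.continuousOn_primitive (μ := volume) (f := f') (a := 0) (b := T)
      hf'int
    have hc : ContinuousOn (fun _ : ℝ => f 0) (Set.Icc 0 T) := continuousOn_const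
    exact (hc.add hp).congr (fun s hs => hf'rep s hs)
  have hconta : ContinuousOn (fun s => |u s - v s|) (Set.Icc 0 T) :=
    ((hcont u hu).sub (hcont v hv)).abs
  set S : ℝ := sSup ((fun s => |u s - v s|) '' Set.Icc (0:ℝ) T) with hSdef
  have hbdd : BddAbove ((fun s => |u s - v s|) '' Set.Icc (0:ℝ) T) :=
    isCompact_Icc.bddAbove_image hconta
  have hSb : ∀ s ∈ Set.Icc (0:ℝ) T, |u s - v s| ≤ S :=
    fun s hs => le_csSup hbdd (Set.mem_image_of_mem _ hs)
  have hS0 : 0 ≤ S := (abs_nonneg _).trans (hSb 0 ⟨le_refl 0, hT⟩)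
  rw [one_mul, abs_sub_le_iff]
  constructor
  · exact play_diff_le ρ T u v w₀₁ w₀₂ w₁ w₂ h₁ h₂ S hS0
      (fun s hs => (le_abs_self _).trans (hSb s hs)) t ht
  · have h := play_diff_le ρ T v u w₀₂ w₀₁ w₂ w₁ h₂ h₁ S hS0
      (fun s hs => by
        have h1 := hSb s hs
        have h2 := le_abs_self (v s - u s)
        rw [abs_sub_comm] at h2
        linarith) t ht
    have h3 := abs_sub_comm w₀₂ w₀₁
    linarith
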